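/- Let d ≥ 4, let V_s = 𝔻_{d,2} + 𝕊_{d,2} + 𝔸_{d,1} ⊆ M(d,d), and let F = V_s ∩ M(d,d)^{S_{d−1}×S_1}, a three-dimensional subspace. Let A : M(d,d) → M(d,d) be a linear map satisfying A(P_σ W P_σᵀ) = P_σ A(W) P_σᵀ for all σ ∈ S_d and all W. Then A preserves both V_s and F, and the characteristic polynomial of the restriction A|_{V_s} equals the (d−1)-st power of the characteristic polynomial of the restriction A|_F. In particular, every eigenvalue of A|_{V_s} has multiplicity divisible by d−1 and is an eigenvalue of A|_F. -/

import Mathlib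

open Matrix

/-- The permutation matrix of `σ`. -/
def permMat {d : ℕ} (σ : Equiv.Perm (Fin d)) : Matrix (Fin d) (Fin d) ℝ :=
  Matrix.of fun i j => if σ j = i then (1 : ℝ) else 0

/-- The fixed-point space of a set `G` of permutations for the diagonal action
`W ↦ P_σ W P_σᵀ` on `d × d` matrices. -/
def fixedSpace {d : ℕ} (G : Set (Equiv.Perm (Fin d))) :
    Submodule ℝ (Matrix (Fin d) (Fin d) ℝ) where
  carrier := {W | ∀ σ ∈ G, permMat σ * W * (permMat σ)ᵀ = W}
  zero_mem' := by intro σ _; simp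
  add_mem' := by
    intro a b ha hb σ hσ
    rw [Matrix.mul_add, Matrix.add_mul, ha σ hσ, hb σ hσ]
  smul_mem' := by
    intro c a ha σ hσ
    rw [Matrix.mul_smul, Matrix.smul_mul, ha σ hσ]

/-- `𝔻_{d,2}`: trace-zero diagonal matrices. -/
def Dd2 (d : ℕ) : Submodule ℝ (Matrix (Fin d) (Fin d) ℝ) where
  carrier := {A | (∀ i j, i ≠ j → A i j = 0) ∧ ∑ i, A i i = 0}
  zero_mem' := ⟨fun i j _ => rfl, by simp⟩
  add_mem' := by
    rintro a b ⟨ha1, ha2⟩ ⟨hb1, hb2⟩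
    refine ⟨fun i j hij => ?_, ?_⟩
    · simp [Matrix.add_apply, ha1 i j hij, hb1 i j hij]
    · simp [Matrix.add_apply, Finset.sum_add_distrib, ha2, hb2]
  smul_mem' := by
    rintro c a ⟨ha1, ha2⟩
    refine ⟨fun i j hij => ?_, ?_⟩
    · simp [Matrix.smul_apply, ha1 i j hij]
    · simp [Matrix.smul_apply, ← Finset.mul_sum, ha2]

/-- `𝕊_{d,2}`: symmetric, zero diagonal, off-diagonal entries `x i + x j`, `∑ x = 0`. -/
def Sd2 (d : ℕ) : Submodule ℝ (Matrix (Fin d) (Fin d) ℝ) where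
  carrier := {A | ∃ x : Fin d → ℝ, (∑ i, x i = 0) ∧ (∀ i, A i i = 0) ∧
    ∀ i j, i ≠ j → A i j = x i + x j}
  zero_mem' := ⟨0, by simp, fun i => rfl, fun i j _ => by simp⟩
  add_mem' := by
    rintro a b ⟨x, hx0, hxd, hx⟩ ⟨y, hy0, hyd, hy⟩
    refine ⟨x + y, by simp [Finset.sum_add_distrib, hx0, hy0], fun i => ?_,
      fun i j hij => ?_⟩
    · simp [Matrix.add_apply, hxd i, hyd i]
    · simp [Matrix.add_apply, hx i j hij, hy i j hij]; ring
  smul_mem' := by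
    rintro c a ⟨x, hx0, hxd, hx⟩
    refine ⟨c • x, by simp [← Finset.mul_sum, hx0], fun i => ?_, fun i j hij => ?_⟩
    · simp [Matrix.smul_apply, hxd i]
    · simp [Matrix.smul_apply, hx i j hij]; ring

/-- `𝔸_{d,1}`: matrices with `A i j = x i − x j` for some `x ∈ ℝᵈ`. -/
def Ad1 (d : ℕ) : Submodule ℝ (Matrix (Fin d) (Fin d) ℝ) where
  carrier := {A | ∃ x : Fin d → ℝ, ∀ i j, A i j = x i - x j}
  zero_mem' := ⟨0, by simp⟩
  add_mem' := by
    rintro a b ⟨x, hx⟩ ⟨y, hy⟩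
    refine ⟨x + y, fun i j => ?_⟩
    simp [Matrix.add_apply, hx, hy]; ring
  smul_mem' := by
    rintro c a ⟨x, hx⟩
    refine ⟨c • x, fun i j => ?_⟩
    simp [Matrix.smul_apply, hx]; ring

/-- `V_s = 𝔻_{d,2} + 𝕊_{d,2} + 𝔸_{d,1}`, the standard isotypic component. -/
def Vs (d : ℕ) : Submodule ℝ (Matrix (Fin d) (Fin d) ℝ) := Dd2 d ⊔ Sd2 d ⊔ Ad1 d

open Submodule

namespace P19
lemma permMat_mul_apply {d : ℕ} (σ : Equiv.Perm (Fin d)) (W : Matrix (Fin d) (Fin d) ℝ)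
    (i j : Fin d) : (permMat σ * W) i j = W (σ⁻¹ i) j := by
  simp only [Matrix.mul_apply, permMat, Matrix.of_apply]
  rw [Finset.sum_eq_single (σ⁻¹ i)]
  · simp
  · intro k _ hk
    rw [if_neg fun h => hk (by rw [← h]; simp), zero_mul]
  · intro h; exact absurd (Finset.mem_univ _) h

lemma mul_permMatT_apply {d : ℕ} (σ : Equiv.Perm (Fin d)) (W : Matrix (Fin d) (Fin d) ℝ)
    (i j : Fin d) : (W * (permMat σ)ᵀ) i j = W i (σ⁻¹ j) := by
  simp only [Matrix.mul_apply, Matrix.transpose_apply, permMat, Matrix.of_apply]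
  rw [Finset.sum_eq_single (σ⁻¹ j)]
  · simp
  · intro k _ hk
    rw [if_neg fun h => hk (by rw [← h]; simp), mul_zero]
  · intro h; exact absurd (Finset.mem_univ _) h

def conjL {d : ℕ} (σ : Equiv.Perm (Fin d)) :
    Matrix (Fin d) (Fin d) ℝ →ₗ[ℝ] Matrix (Fin d) (Fin d) ℝ where
  toFun W := permMat σ * W * (permMat σ)ᵀ
  map_add' U V := by show permMat σ * (U + V) * (permMat σ)ᵀ = permMat σ * U * (permMat σ)ᵀ + permMat σ * V * (permMat σ)ᵀ; rw [Matrix.mul_add, Matrix.add_mul]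
  map_smul' c U := by simp only [RingHom.id_apply]; rw [Matrix.mul_smul, Matrix.smul_mul]

lemma conjL_eq {d : ℕ} (σ : Equiv.Perm (Fin d)) (W : Matrix (Fin d) (Fin d) ℝ) :
    conjL σ W = permMat σ * W * (permMat σ)ᵀ := rfl

lemma conjL_apply {d : ℕ} (σ : Equiv.Perm (Fin d)) (W : Matrix (Fin d) (Fin d) ℝ)
    (i j : Fin d) : conjL σ W i j = W (σ⁻¹ i) (σ⁻¹ j) := by
  show (permMat σ * W * (permMat σ)ᵀ) i j = _
  rw [mul_permMatT_apply, permMat_mul_apply]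

variable {d : ℕ}

def phiD : (Fin d → ℝ) →ₗ[ℝ] Matrix (Fin d) (Fin d) ℝ where
  toFun x := Matrix.of fun i j => if i = j then x i else 0
  map_add' x y := by ext i j; by_cases h : i = j <;> simp [h]
  map_smul' c x := by ext i j; by_cases h : i = j <;> simp [h]

def phiS : (Fin d → ℝ) →ₗ[ℝ] Matrix (Fin d) (Fin d) ℝ where
  toFun x := Matrix.of fun i j => if i = j then 0 else x i + x j
  map_add' x y := by ext i j; by_cases h : i = j <;> simp [h]; ring
  map_smul' c x := by ext i j; by_cases h : i = j <;> simp [h]; ring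

def phiA : (Fin d → ℝ) →ₗ[ℝ] Matrix (Fin d) (Fin d) ℝ where
  toFun x := Matrix.of fun i j => x i - x j
  map_add' x y := by ext i j; simp; ring
  map_smul' c x := by ext i j; simp; ring

@[simp] lemma phiD_apply (x : Fin d → ℝ) (i j : Fin d) :
    phiD x i j = if i = j then x i else 0 := rfl
@[simp] lemma phiS_apply (x : Fin d → ℝ) (i j : Fin d) :
    phiS x i j = if i = j then 0 else x i + x j := rfl
@[simp] lemma phiA_apply (x : Fin d → ℝ) (i j : Fin d) :
    phiA x i j = x i - x j := rfl

lemma phiD_equiv (σ : Equiv.Perm (Fin d)) (x : Fin d → ℝ) :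
    conjL σ (phiD x) = phiD (fun i => x (σ⁻¹ i)) := by
  ext i j
  rw [conjL_apply, phiD_apply, phiD_apply]
  by_cases h : i = j
  · simp [h]
  · rw [if_neg fun hc => h ((σ⁻¹).injective hc), if_neg h]

lemma phiS_equiv (σ : Equiv.Perm (Fin d)) (x : Fin d → ℝ) :
    conjL σ (phiS x) = phiS (fun i => x (σ⁻¹ i)) := by
  ext i j
  rw [conjL_apply, phiS_apply, phiS_apply]
  by_cases h : i = j
  · simp [h]
  · rw [if_neg fun hc => h ((σ⁻¹).injective hc), if_neg h]

lemma phiA_equiv (σ : Equiv.Perm (Fin d)) (x : Fin d → ℝ) :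
    conjL σ (phiA x) = phiA (fun i => x (σ⁻¹ i)) := by
  ext i j; rw [conjL_apply]; rfl

lemma inv_eq_iff (σ : Equiv.Perm (Fin d)) (i j : Fin d) : σ⁻¹ i = j ↔ i = σ j := by
  constructor
  · intro h; rw [← h]; simp
  · intro h; rw [h]; simp

lemma swap_apply_ne {a b i j : Fin d} (ha : b ≠ j) (hb : a ≠ j) (hi : i ≠ j) :
    Equiv.swap a b i ≠ j := by
  rw [Equiv.swap_apply_def]; split_ifs <;> assumption

variable {n : ℕ}

def e0 : Fin (n+4) := ⟨0, by omega⟩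
def e1 : Fin (n+4) := ⟨1, by omega⟩
def e2 : Fin (n+4) := ⟨2, by omega⟩
def em : Fin (n+4) := ⟨n+3, by omega⟩

lemma e01 : (e0 : Fin (n+4)) ≠ e1 := by simp [e0, e1, Fin.ext_iff]
lemma e02 : (e0 : Fin (n+4)) ≠ e2 := by simp [e0, e2, Fin.ext_iff]
lemma e12 : (e1 : Fin (n+4)) ≠ e2 := by simp [e1, e2, Fin.ext_iff]
lemma e0m : (e0 : Fin (n+4)) ≠ em := by simp [e0, em, Fin.ext_iff]
lemma e1m : (e1 : Fin (n+4)) ≠ em := by simp [e1, em, Fin.ext_iff]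
lemma e2m : (e2 : Fin (n+4)) ≠ em := by simp [e2, em, Fin.ext_iff]

def x0 : Fin (n+4) → ℝ := fun i => (if i = e0 then 1 else 0) - (if i = e1 then 1 else 0)

lemma x0_e0 : x0 (e0 : Fin (n+4)) = 1 := by simp [x0, e01]
lemma x0_e1 : x0 (e1 : Fin (n+4)) = -1 := by simp [x0, e01.symm]
lemma x0_other {i : Fin (n+4)} (h0 : i ≠ e0) (h1 : i ≠ e1) : x0 i = 0 := by
  simp [x0, h0, h1]
end P19

namespace P19
variable {n : ℕ}

def sigk (n : ℕ) (k : Fin (n+4)) : Equiv.Perm (Fin (n+4)) := Equiv.swap e0 k * Equiv.swap e1 em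

def sig3 (n : ℕ) : Equiv.Perm (Fin (n+4)) := Equiv.swap e0 e1 * Equiv.swap e1 e2

lemma schur (A : Matrix (Fin (n+4)) (Fin (n+4)) ℝ →ₗ[ℝ] Matrix (Fin (n+4)) (Fin (n+4)) ℝ)
    (hA : ∀ σ W, A (conjL σ W) = conjL σ (A W)) :
    ∀ (φ : (Fin (n+4) → ℝ) →ₗ[ℝ] Matrix (Fin (n+4)) (Fin (n+4)) ℝ),
    (∀ σ x, conjL σ (φ x) = φ (fun i => x (σ⁻¹ i))) →
    ∃ a s c : ℝ, ∀ x : Fin (n+4) → ℝ, (∑ i, x i = 0) →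
      A (φ x) = a • phiD x + s • phiS x + c • phiA x := by
  intro φ hφ
  set W := A (φ x0) with hWdef
  have key : ∀ σ : Equiv.Perm (Fin (n+4)), A (φ (fun i => x0 (σ⁻¹ i))) = conjL σ W := by
    intro σ; rw [← hφ, hA, ← hWdef]
  -- swap (e0,e1) negates W
  have hτx : (fun i => x0 ((Equiv.swap (e0 : Fin (n+4)) e1)⁻¹ i)) = -x0 := by
    funext i
    simp only [Equiv.swap_inv, Pi.neg_apply]
    by_cases h0 : i = e0
    · subst h0; rw [Equiv.swap_apply_left, x0_e1, x0_e0]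
    by_cases h1 : i = e1
    · subst h1; rw [Equiv.swap_apply_right, x0_e0, x0_e1]; ring
    · rw [Equiv.swap_apply_of_ne_of_ne h0 h1, x0_other h0 h1]; ring
  have hswap : ∀ i j, W (Equiv.swap (e0 : Fin (n+4)) e1 i) (Equiv.swap e0 e1 j) = - W i j := by
    intro i j
    have h1 : conjL (Equiv.swap (e0 : Fin (n+4)) e1) W = - W := by
      rw [hWdef, ← hA, hφ, hτx, map_neg φ, map_neg A]
    have h2 := conjL_apply (Equiv.swap (e0 : Fin (n+4)) e1) W
        (Equiv.swap e0 e1 i) (Equiv.swap e0 e1 j)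
    rw [h1] at h2
    simp only [Equiv.swap_inv, Equiv.swap_apply_self, Matrix.neg_apply] at h2
    linarith
  -- swaps fixing e0, e1 fix W
  have hfix : ∀ k : Fin (n+4), k ≠ e0 → k ≠ e1 → ∀ i j,
      W (Equiv.swap (e2 : Fin (n+4)) k i) (Equiv.swap e2 k j) = W i j := by
    intro k hk0 hk1 i j
    have hx : (fun i => x0 ((Equiv.swap (e2 : Fin (n+4)) k)⁻¹ i)) = x0 := by
      funext i
      simp only [Equiv.swap_inv]
      by_cases h0 : i = e0
      · subst h0; rw [Equiv.swap_apply_of_ne_of_ne e02 hk0.symm]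
      by_cases h1 : i = e1
      · subst h1; rw [Equiv.swap_apply_of_ne_of_ne e12 hk1.symm]
      · rw [x0_other (swap_apply_ne hk0 e02.symm h0) (swap_apply_ne hk1 e12.symm h1),
          x0_other h0 h1]
    have h1 : conjL (Equiv.swap (e2 : Fin (n+4)) k) W = W := by
      rw [hWdef, ← hA, hφ, hx, ← hWdef]
    have h2 := conjL_apply (Equiv.swap (e2 : Fin (n+4)) k) W
        (Equiv.swap e2 k i) (Equiv.swap e2 k j)
    rw [h1] at h2
    simpa only [Equiv.swap_inv, Equiv.swap_apply_self] using h2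
  -- the 3-cycle relation gives the constraint
  have hcon : W (e0 : Fin (n+4)) e2 = W e0 e1 + W e2 e0 := by
    have hσ₃inv : ∀ i, (sig3 n)⁻¹ i
        = Equiv.swap (e1 : Fin (n+4)) e2 (Equiv.swap e0 e1 i) := by
      intro i
      rw [sig3, _root_.mul_inv_rev]
      simp [Equiv.swap_inv, Equiv.Perm.mul_apply]
    have hrel : (fun i => x0 ((Equiv.swap (e1 : Fin (n+4)) e2)⁻¹ i))
        = x0 + (fun i => x0 ((sig3 n)⁻¹ i)) := by
      funext i
      simp only [Pi.add_apply, Equiv.swap_inv, hσ₃inv]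
      by_cases h0 : i = e0
      · subst h0
        rw [Equiv.swap_apply_of_ne_of_ne e01 e02, Equiv.swap_apply_left,
          Equiv.swap_apply_left, x0_e0, x0_other e02.symm e12.symm]
        ring
      by_cases h1 : i = e1
      · subst h1
        rw [Equiv.swap_apply_left, Equiv.swap_apply_right, Equiv.swap_apply_of_ne_of_ne e01 e02,
          x0_other e02.symm e12.symm, x0_e1, x0_e0]
        ring
      by_cases h2 : i = e2
      · subst h2
        rw [Equiv.swap_apply_right, Equiv.swap_apply_of_ne_of_ne e02.symm e12.symm,
          Equiv.swap_apply_right, x0_e1, x0_other e02.symm e12.symm]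
        ring
      · rw [Equiv.swap_apply_of_ne_of_ne h1 h2, Equiv.swap_apply_of_ne_of_ne h0 h1,
          Equiv.swap_apply_of_ne_of_ne h1 h2, x0_other h0 h1]
        ring
    have h1 : conjL (Equiv.swap (e1 : Fin (n+4)) e2) W
        = W + conjL (sig3 n) W := by
      rw [← key (Equiv.swap (e1 : Fin (n+4)) e2), hrel, map_add, map_add,
        key (sig3 n), ← hWdef]
    have h2 := congrFun (congrFun h1 e0) e1
    have p1 : (Equiv.swap (e1 : Fin (n+4)) e2)⁻¹ e0 = e0 := by
      rw [Equiv.swap_inv]; exact Equiv.swap_apply_of_ne_of_ne e01 e02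
    have p2 : (Equiv.swap (e1 : Fin (n+4)) e2)⁻¹ e1 = e2 := by
      rw [Equiv.swap_inv]; exact Equiv.swap_apply_left _ _
    have p3 : (sig3 n)⁻¹ e0 = e2 := by
      rw [hσ₃inv, Equiv.swap_apply_left, Equiv.swap_apply_left]
    have p4 : (sig3 n)⁻¹ e1 = e0 := by
      rw [hσ₃inv, Equiv.swap_apply_right, Equiv.swap_apply_of_ne_of_ne e01 e02]
    rw [conjL_apply, Matrix.add_apply, conjL_apply, p1, p2, p3, p4] at h2
    exact h2
  -- entry facts
  have f11 : W (e1 : Fin (n+4)) e1 = - W e0 e0 := by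
    have h := hswap e0 e0; rwa [Equiv.swap_apply_left] at h
  have f10 : W (e1 : Fin (n+4)) e0 = - W e0 e1 := by
    have h := hswap e0 e1; rwa [Equiv.swap_apply_left, Equiv.swap_apply_right] at h
  have fγ : ∀ j, j ≠ e0 → j ≠ e1 → W (e0 : Fin (n+4)) j = W e0 e2 := by
    intro j h0 h1
    have h := hfix j h0 h1 e0 e2
    rwa [Equiv.swap_apply_of_ne_of_ne e02 h0.symm, Equiv.swap_apply_left] at h
  have fδ : ∀ i, i ≠ e0 → i ≠ e1 → W i (e0 : Fin (n+4)) = W e2 e0 := by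
    intro i h0 h1
    have h := hfix i h0 h1 e2 e0
    rwa [Equiv.swap_apply_left, Equiv.swap_apply_of_ne_of_ne e02 h0.symm] at h
  have f1j : ∀ j, j ≠ e0 → j ≠ e1 → W (e1 : Fin (n+4)) j = - W e0 e2 := by
    intro j h0 h1
    have h := hswap e0 j
    rw [Equiv.swap_apply_left, Equiv.swap_apply_of_ne_of_ne h0 h1] at h
    rw [h, fγ j h0 h1]
  have fj1 : ∀ i, i ≠ e0 → i ≠ e1 → W i (e1 : Fin (n+4)) = - W e2 e0 := by
    intro i h0 h1
    have h := hswap i e0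
    rw [Equiv.swap_apply_left, Equiv.swap_apply_of_ne_of_ne h0 h1] at h
    rw [h, fδ i h0 h1]
  have fzz : ∀ i j, i ≠ e0 → i ≠ e1 → j ≠ e0 → j ≠ e1 → W i j = 0 := by
    intro i j hi0 hi1 hj0 hj1
    have h := hswap i j
    rw [Equiv.swap_apply_of_ne_of_ne hi0 hi1, Equiv.swap_apply_of_ne_of_ne hj0 hj1] at h
    linarith
  -- the main identity on the generator
  have main0 : W = (W e0 e0) • phiD x0 + ((W e0 e2 + W e2 e0)/2) • phiS x0
      + (W e0 e1/2) • phiA x0 := by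
    ext i j
    simp only [Matrix.add_apply, Matrix.smul_apply, phiD_apply, phiS_apply, phiA_apply,
      smul_eq_mul]
    by_cases h0 : i = e0
    · subst h0
      by_cases g0 : j = e0
      · subst g0; rw [if_pos rfl, if_pos rfl, x0_e0]; ring
      by_cases g1 : j = e1
      · subst g1
        rw [if_neg e01, if_neg e01, x0_e0, x0_e1]; ring
      · rw [if_neg (Ne.symm g0), if_neg (Ne.symm g0), x0_e0, x0_other g0 g1, fγ j g0 g1]
        linarith [hcon]
    by_cases h1 : i = e1
    · subst h1
      by_cases g0 : j = e0
      · subst g0; rw [if_neg e01.symm, if_neg e01.symm, x0_e1, x0_e0, f10]; ring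
      by_cases g1 : j = e1
      · subst g1; rw [if_pos rfl, if_pos rfl, x0_e1, f11]; ring
      · rw [if_neg (Ne.symm g1), if_neg (Ne.symm g1), x0_e1, x0_other g0 g1, f1j j g0 g1]
        linarith [hcon]
    · by_cases g0 : j = e0
      · subst g0; rw [if_neg h0, if_neg h0, x0_other h0 h1, x0_e0, fδ i h0 h1]
        linarith [hcon]
      by_cases g1 : j = e1
      · subst g1; rw [if_neg h1, if_neg h1, x0_other h0 h1, x0_e1, fj1 i h0 h1]
        linarith [hcon]
      by_cases hij : i = j
      · subst hij
        rw [if_pos rfl, if_pos rfl, x0_other h0 h1, fzz i i h0 h1 h0 h1]; ring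
      · rw [if_neg hij, if_neg hij, x0_other h0 h1, x0_other g0 g1, fzz i j h0 h1 g0 g1]
        ring
  refine ⟨W e0 e0, (W e0 e2 + W e2 e0)/2, W e0 e1/2, ?_⟩
  -- translate to all basis vectors
  have hgenσ : ∀ σ : Equiv.Perm (Fin (n+4)),
      A (φ (fun i => x0 (σ⁻¹ i))) = (W e0 e0) • phiD (fun i => x0 (σ⁻¹ i))
        + ((W e0 e2 + W e2 e0)/2) • phiS (fun i => x0 (σ⁻¹ i))
        + (W e0 e1/2) • phiA (fun i => x0 (σ⁻¹ i)) := by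
    intro σ
    conv_lhs => rw [key σ, main0]
    rw [map_add, map_add, _root_.map_smul, _root_.map_smul, _root_.map_smul,
      phiD_equiv, phiS_equiv, phiA_equiv]
  have hgenk : ∀ k : Fin (n+4),
      A (φ (fun i => (if i = k then (1:ℝ) else 0) - (if i = em then 1 else 0)))
        = (W e0 e0) • phiD (fun i => (if i = k then (1:ℝ) else 0) - (if i = em then 1 else 0))
        + ((W e0 e2 + W e2 e0)/2) • phiS (fun i => (if i = k then (1:ℝ) else 0) - (if i = em then 1 else 0))
        + (W e0 e1/2) • phiA (fun i => (if i = k then (1:ℝ) else 0) - (if i = em then 1 else 0)) := by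
    intro k
    by_cases hk : k = em
    · subst hk
      have hz : (fun i : Fin (n+4) => (if i = em then (1:ℝ) else 0) - (if i = em then 1 else 0))
          = 0 := by funext i; simp
      rw [hz]
      simp
    · have hσ0 : (sigk n k) e0 = k := by
        rw [sigk, Equiv.Perm.mul_apply, Equiv.swap_apply_of_ne_of_ne e01 e0m,
          Equiv.swap_apply_left]
      have hσ1 : (sigk n k) e1 = em := by
        rw [sigk, Equiv.Perm.mul_apply, Equiv.swap_apply_left,
          Equiv.swap_apply_of_ne_of_ne e0m.symm (Ne.symm hk)]
      have hxu : (fun i => x0 ((sigk n k)⁻¹ i))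
          = fun i => (if i = k then (1:ℝ) else 0) - (if i = em then 1 else 0) := by
        funext i
        have t1 : ((sigk n k)⁻¹ i = e0) ↔ (i = k) := by
          rw [inv_eq_iff, hσ0]
        have t2 : ((sigk n k)⁻¹ i = e1) ↔ (i = em) := by
          rw [inv_eq_iff, hσ1]
        show (if _ = e0 then (1:ℝ) else 0) - (if _ = e1 then 1 else 0) = _
        rw [if_congr t1 rfl rfl, if_congr t2 rfl rfl]
      have h := hgenσ (sigk n k)
      rwa [hxu] at h
  intro x hx
  have hxdec : x = ∑ k : Fin (n+4), x k •
      (fun i => (if i = k then (1:ℝ) else 0) - (if i = em then 1 else 0)) := by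
    funext i
    rw [Finset.sum_apply]
    simp only [Pi.smul_apply, smul_eq_mul, mul_sub, Finset.sum_sub_distrib, mul_ite, mul_one,
      mul_zero]
    by_cases him : i = em
    · subst him; simp [Finset.sum_ite_eq, hx]
    · simp [him, Finset.sum_ite_eq]
  rw [hxdec, map_sum, map_sum, map_sum, map_sum, map_sum]
  rw [Finset.smul_sum, Finset.smul_sum, Finset.smul_sum, ← Finset.sum_add_distrib,
    ← Finset.sum_add_distrib]
  refine Finset.sum_congr rfl fun k _ => ?_
  simp only [_root_.map_smul]
  rw [hgenk k, smul_add, smul_add, smul_comm (x k) (W e0 e0),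
    smul_comm (x k) ((W e0 e2 + W e2 e0)/2), smul_comm (x k) (W e0 e1/2)]
end P19

namespace P19
variable {n : ℕ}

lemma decomp_unique (x y z : Fin (n+4) → ℝ) (hz : ∑ i, z i = 0)
    (h : phiD x + phiS y + phiA z = 0) : x = 0 ∧ y = 0 ∧ z = 0 := by
  have hent : ∀ i j : Fin (n+4),
      ((if i = j then x i else 0) + (if i = j then 0 else y i + y j)) + (z i - z j) = 0 := by
    intro i j
    have hij : (phiD x + phiS y + phiA z) i j = (0 : Matrix (Fin (n+4)) (Fin (n+4)) ℝ) i j := by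
      rw [h]
    simpa [Matrix.add_apply] using hij
  have hx : ∀ i, x i = 0 := by intro i; have := hent i i; simpa using this
  have hyz : ∀ i j, i ≠ j → (y i + y j = 0 ∧ z i = z j) := by
    intro i j hij
    have h1 := hent i j
    have h2 := hent j i
    rw [if_neg hij, if_neg hij] at h1
    rw [if_neg (Ne.symm hij), if_neg (Ne.symm hij)] at h2
    constructor <;> linarith
  have hy : ∀ i, y i = 0 := by
    intro i
    by_cases h0 : i = e0
    · subst h0
      linarith [(hyz e0 e1 e01).1, (hyz e0 e2 e02).1, (hyz e1 e2 e12).1]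
    by_cases h1 : i = e1
    · subst h1
      linarith [(hyz e0 e1 e01).1, (hyz e0 e2 e02).1, (hyz e1 e2 e12).1]
    · linarith [(hyz i e0 h0).1, (hyz i e1 h1).1, (hyz e0 e1 e01).1]
  have hzc : ∀ i, z i = z e0 := by
    intro i
    by_cases h0 : i = e0
    · rw [h0]
    · exact (hyz i e0 h0).2
  have hze0 : z e0 = 0 := by
    have hs : ∑ i : Fin (n+4), z i = ∑ _i : Fin (n+4), z e0 :=
      Finset.sum_congr rfl fun i _ => hzc i
    rw [hz, Finset.sum_const, Finset.card_univ, Fintype.card_fin, nsmul_eq_mul] at hs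
    have : ((n:ℝ) + 4) ≠ 0 := by positivity
    rw [eq_comm, mul_eq_zero] at hs
    rcases hs with hs | hs
    · exact absurd hs (by exact_mod_cast this)
    · exact hs
  exact ⟨funext hx, funext hy, funext fun i => by rw [hzc i, hze0]; rfl⟩

lemma mem_Dd2 {x : Fin (n+4) → ℝ} (hx : ∑ i, x i = 0) : phiD x ∈ Dd2 (n+4) := by
  refine ⟨fun i j hij => if_neg hij, ?_⟩
  simpa using hx

lemma mem_Sd2 {x : Fin (n+4) → ℝ} (hx : ∑ i, x i = 0) : phiS x ∈ Sd2 (n+4) :=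
  ⟨x, hx, fun i => if_pos rfl, fun i j hij => if_neg hij⟩

lemma mem_Ad1 (x : Fin (n+4) → ℝ) : phiA x ∈ Ad1 (n+4) := ⟨x, fun _ _ => rfl⟩

lemma comb_mem_Vs {x y z : Fin (n+4) → ℝ} (hx : ∑ i, x i = 0) (hy : ∑ i, y i = 0) :
    phiD x + phiS y + phiA z ∈ Vs (n+4) := by
  refine Submodule.add_mem _ (Submodule.add_mem _ ?_ ?_) ?_
  · exact Submodule.mem_sup_left (Submodule.mem_sup_left (mem_Dd2 hx))
  · exact Submodule.mem_sup_left (Submodule.mem_sup_right (mem_Sd2 hy))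
  · exact Submodule.mem_sup_right (mem_Ad1 z)

lemma mem_Vs_elim {W : Matrix (Fin (n+4)) (Fin (n+4)) ℝ} (hW : W ∈ Vs (n+4)) :
    ∃ x y z : Fin (n+4) → ℝ, (∑ i, x i = 0) ∧ (∑ i, y i = 0) ∧ (∑ i, z i = 0) ∧
      W = phiD x + phiS y + phiA z := by
  rw [Vs, Submodule.mem_sup] at hW
  obtain ⟨u, hu, v, hv, rfl⟩ := hW
  rw [Submodule.mem_sup] at hu
  obtain ⟨p, hp, q, hq, rfl⟩ := hu
  obtain ⟨hpo, hpt⟩ := hp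
  obtain ⟨y, hy0, hyd, hyo⟩ := hq
  obtain ⟨z, hzf⟩ := hv
  set z' : Fin (n+4) → ℝ := fun i => z i - (∑ j, z j) / (n+4) with hz'
  refine ⟨fun i => p i i, y, z', by simpa using hpt, hy0, ?_, ?_⟩
  · rw [hz']
    rw [Finset.sum_sub_distrib, Finset.sum_const, Finset.card_univ, Fintype.card_fin,
      nsmul_eq_mul]
    have : ((n:ℝ) + 4) ≠ 0 := by positivity
    field_simp
    simp
  · ext i j
    simp only [Matrix.add_apply, phiD_apply, phiS_apply, phiA_apply]
    by_cases hij : i = j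
    · subst hij
      rw [if_pos rfl, if_pos rfl, hyd i, hzf i i, hz']
      ring
    · rw [if_neg hij, if_neg hij, hyo i j hij, hzf i j, hpo i j hij, hz']
      ring

def wv : Fin (n+4) → ℝ := fun i => 1 - (if i = em then ((n:ℝ)+4) else 0)

lemma sum_wv : ∑ i, (wv : Fin (n+4) → ℝ) i = 0 := by
  simp only [wv, Finset.sum_sub_distrib, Finset.sum_const, Finset.card_univ, Fintype.card_fin,
    nsmul_eq_mul, mul_one, Finset.sum_ite_eq' Finset.univ (em : Fin (n+4)) fun _ => ((n:ℝ)+4)]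
  simp

lemma wv_e0 : (wv : Fin (n+4) → ℝ) e0 = 1 := by simp [wv, e0m]

lemma wv_comp (σ : Equiv.Perm (Fin (n+4))) (hσ : σ em = em) :
    (fun i => wv (σ⁻¹ i)) = (wv : Fin (n+4) → ℝ) := by
  funext i
  have t : ((σ⁻¹ i = em)) ↔ (i = em) := by rw [inv_eq_iff, hσ]
  show (1:ℝ) - _ = 1 - _
  rw [if_congr t rfl rfl]
end P19

namespace P19
variable {n : ℕ}

lemma conj_comb (σ : Equiv.Perm (Fin (n+4))) (x y z : Fin (n+4) → ℝ) :
    conjL σ (phiD x + phiS y + phiA z) =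
      phiD (fun i => x (σ⁻¹ i)) + phiS (fun i => y (σ⁻¹ i)) + phiA (fun i => z (σ⁻¹ i)) := by
  rw [map_add, map_add, phiD_equiv, phiS_equiv, phiA_equiv]

lemma fixed_vec (x : Fin (n+4) → ℝ) (hsum : ∑ i, x i = 0)
    (hfix : ∀ σ : Equiv.Perm (Fin (n+4)), σ em = em → ∀ i, x (σ⁻¹ i) = x i) :
    x = x e0 • wv := by
  have hconst : ∀ i, i ≠ em → x i = x e0 := by
    intro i hi
    have hσ : Equiv.swap (e0 : Fin (n+4)) i em = em :=
      Equiv.swap_apply_of_ne_of_ne e0m.symm (Ne.symm hi)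
    have h := hfix (Equiv.swap (e0 : Fin (n+4)) i) hσ i
    rw [Equiv.swap_inv, Equiv.swap_apply_right] at h
    exact h.symm
  have hsplit : ∀ i, x i = x e0 + (if i = em then x em - x e0 else 0) := by
    intro i
    by_cases hi : i = em
    · rw [if_pos hi, hi]; ring
    · rw [if_neg hi, hconst i hi]; ring
  have hsum2 : ((n:ℝ)+4) * x e0 + (x em - x e0) = 0 := by
    have := hsum
    rw [Finset.sum_congr rfl fun i _ => hsplit i, Finset.sum_add_distrib,
      Finset.sum_const, Finset.card_univ, Fintype.card_fin, nsmul_eq_mul,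
      Finset.sum_ite_eq' Finset.univ (em : Fin (n+4)) fun _ => x em - x e0] at this
    simpa using this
  funext i
  by_cases hi : i = em
  · subst hi
    show x em = x e0 * wv em
    rw [show (wv : Fin (n+4) → ℝ) em = 1 - ((n:ℝ)+4) by simp [wv]]
    linarith
  · rw [hconst i hi]
    show x e0 = x e0 * wv i
    rw [show (wv : Fin (n+4) → ℝ) i = 1 by simp [wv, hi]]
    ring

lemma comb_mem_F (t u v : ℝ) :
    t • phiD (wv : Fin (n+4) → ℝ) + u • phiS wv + v • phiA wv ∈
      Vs (n+4) ⊓ fixedSpace {σ : Equiv.Perm (Fin (n+4)) | σ em = em} := by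
  constructor
  · rw [← _root_.map_smul, ← _root_.map_smul, ← _root_.map_smul]
    refine comb_mem_Vs ?_ ?_
    · simp [← Finset.mul_sum, sum_wv]
    · simp [← Finset.mul_sum, sum_wv]
  · intro σ hσ
    have hσ' : σ em = em := hσ
    show conjL σ _ = _
    rw [map_add, map_add, _root_.map_smul, _root_.map_smul, _root_.map_smul,
      phiD_equiv, phiS_equiv, phiA_equiv, wv_comp σ hσ']

lemma mem_F_elim {W : Matrix (Fin (n+4)) (Fin (n+4)) ℝ}
    (hW : W ∈ Vs (n+4) ⊓ fixedSpace {σ : Equiv.Perm (Fin (n+4)) | σ em = em}) :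
    ∃ t u v : ℝ, W = t • phiD (wv : Fin (n+4) → ℝ) + u • phiS wv + v • phiA wv := by
  obtain ⟨hV, hfixW⟩ := hW
  obtain ⟨x, y, z, hx, hy, hz, rfl⟩ := mem_Vs_elim hV
  have hcomp : ∀ σ : Equiv.Perm (Fin (n+4)), σ em = em →
      ((fun i => x (σ⁻¹ i)) = x ∧ (fun i => y (σ⁻¹ i)) = y ∧ (fun i => z (σ⁻¹ i)) = z) := by
    intro σ hσ
    have hfx := hfixW σ hσ
    have hc : conjL σ (phiD x + phiS y + phiA z) = phiD x + phiS y + phiA z := hfx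
    rw [conj_comb] at hc
    have hzero : phiD ((fun i => x (σ⁻¹ i)) - x) + phiS ((fun i => y (σ⁻¹ i)) - y)
        + phiA ((fun i => z (σ⁻¹ i)) - z) = 0 := by
      have h0 := sub_eq_zero.mpr hc
      rw [map_sub, map_sub, map_sub, ← h0]
      abel
    have hsz : ∑ i, ((fun i => z (σ⁻¹ i)) - z) i = 0 := by
      simp only [Pi.sub_apply, Finset.sum_sub_distrib]
      rw [Equiv.sum_comp σ⁻¹ z]
      ring
    obtain ⟨h1, h2, h3⟩ := decomp_unique _ _ _ hsz hzero
    exact ⟨by rwa [sub_eq_zero] at h1, by rwa [sub_eq_zero] at h2, by rwa [sub_eq_zero] at h3⟩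
  have hxw := fixed_vec x hx fun σ hσ i => congrFun (hcomp σ hσ).1 i
  have hyw := fixed_vec y hy fun σ hσ i => congrFun (hcomp σ hσ).2.1 i
  have hzw := fixed_vec z hz fun σ hσ i => congrFun (hcomp σ hσ).2.2 i
  exact ⟨x e0, y e0, z e0, by
    rw [hxw, hyw, hzw, _root_.map_smul, _root_.map_smul, _root_.map_smul]
    simp [wv_e0]⟩
end P19

namespace P19
variable {n : ℕ}

lemma toMatrix_eq {ι : Type*} [Fintype ι] [DecidableEq ι] {M : Type*} [AddCommGroup M]
    [Module ℝ M] (b : Module.Basis ι ℝ M) (f : M →ₗ[ℝ] M) (N : Matrix ι ι ℝ)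
    (h : ∀ j, f (b j) = ∑ i, N i j • b i) :
    LinearMap.toMatrix b b f = N := by
  ext i j
  rw [LinearMap.toMatrix_apply, h j]
  exact congrFun (b.repr_sum_self fun i => N i j) i

lemma charpoly_blockDiag {m o : Type*} [Fintype m] [DecidableEq m] [Fintype o] [DecidableEq o]
    (N : Matrix m m ℝ) :
    (blockDiagonal (fun _ : o => N)).charpoly = N.charpoly ^ (Fintype.card o) := by
  have hc : charmatrix (blockDiagonal (fun _ : o => N))
      = blockDiagonal (fun _ : o => charmatrix N) := by
    ext ⟨i, k⟩ ⟨j, l⟩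
    by_cases hkl : k = l
    · subst hkl
      by_cases hij : i = j
      · subst hij
        rw [charmatrix_apply_eq, blockDiagonal_apply_eq, blockDiagonal_apply_eq,
          charmatrix_apply_eq]
      · have hne : ((i,k) : m × o) ≠ (j,k) := fun h => hij (Prod.ext_iff.mp h).1
        rw [charmatrix_apply_ne _ _ _ hne, blockDiagonal_apply_eq, blockDiagonal_apply_eq,
          charmatrix_apply_ne _ _ _ hij]
    · have hne : ((i,k) : m × o) ≠ (j,l) := fun h => hkl (Prod.ext_iff.mp h).2
      rw [charmatrix_apply_ne _ _ _ hne, blockDiagonal_apply_ne _ _ _ hkl,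
        blockDiagonal_apply_ne _ _ _ hkl]
      simp
  rw [Matrix.charpoly, hc, Matrix.det_blockDiagonal, Finset.prod_const, Finset.card_univ]
  rfl

def vι (k : Fin (n+3)) : Fin (n+4) := ⟨k.val, by omega⟩

lemma vι_ne_em (k : Fin (n+3)) : vι k ≠ (em : Fin (n+4)) := by
  intro h
  have : (k : ℕ) = n + 3 := congrArg Fin.val h
  omega

lemma vι_inj {k l : Fin (n+3)} (h : vι k = vι l) : k = l := by
  simp only [vι, Fin.ext_iff] at h ⊢
  exact h

lemma sum_split (f : Fin (n+4) → ℝ) :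
    ∑ i, f i = (∑ k : Fin (n+3), f (vι k)) + f em :=
  Fin.sum_univ_castSucc f

def vv (k : Fin (n+3)) : Fin (n+4) → ℝ :=
  fun i => (if i = vι k then (1:ℝ) else 0) - (if i = em then 1 else 0)

lemma sum_vv (k : Fin (n+3)) : ∑ i, vv k i = 0 := by
  simp only [vv, Finset.sum_sub_distrib,
    Finset.sum_ite_eq' Finset.univ (vι k) fun _ => (1:ℝ),
    Finset.sum_ite_eq' Finset.univ (em : Fin (n+4)) fun _ => (1:ℝ)]
  simp

lemma comb_apply (c : Fin (n+3) → ℝ) (i : Fin (n+4)) :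
    (∑ k, c k • vv k) i
      = (∑ k, if i = vι k then c k else 0) - (if i = em then ∑ k, c k else 0) := by
  rw [Finset.sum_apply]
  simp only [Pi.smul_apply, vv, smul_eq_mul, mul_sub, Finset.sum_sub_distrib, mul_ite, mul_one,
    mul_zero]
  congr 1
  by_cases hi : i = em
  · simp [hi]
  · simp [hi]

lemma decomp_coord (x : Fin (n+4) → ℝ) (hx : ∑ i, x i = 0) :
    x = ∑ k : Fin (n+3), x (vι k) • vv k := by
  funext i
  rw [comb_apply]
  by_cases hi : i = em
  · subst hi
    rw [if_pos rfl, Finset.sum_eq_zero fun k _ => if_neg fun h => (vι_ne_em k) h.symm]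
    have hs := sum_split x
    rw [hx] at hs
    linarith
  · rw [if_neg hi]
    have hval : i.val < n+3 := by
      have h2 := i.isLt
      have h3 : i.val ≠ n+3 := fun h => hi (by simp only [em, Fin.ext_iff]; exact h)
      omega
    rw [Finset.sum_eq_single (⟨i.val, hval⟩ : Fin (n+3))]
    · rw [if_pos (by simp [vι, Fin.ext_iff])]
      simp [vι]
    · intro k _ hk
      refine if_neg fun h => hk ?_
      have := congrArg Fin.val h
      simp only [vι] at this
      simp [Fin.ext_iff, ← this]
    · intro h; exact absurd (Finset.mem_univ _) h

lemma vv_indep (c : Fin (n+3) → ℝ) (h : ∑ k, c k • vv k = 0) : ∀ k, c k = 0 := by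
  intro k0
  have h1 := congrFun h (vι k0)
  rw [comb_apply, if_neg (vι_ne_em k0)] at h1
  rw [Finset.sum_eq_single k0] at h1
  · rw [if_pos rfl] at h1
    simpa using h1
  · intro k _ hk
    exact if_neg fun hh => hk (vι_inj hh.symm)
  · intro h; exact absurd (Finset.mem_univ _) h
end P19

namespace P19
variable {n : ℕ}

def Phi : Fin 3 → ((Fin (n+4) → ℝ) →ₗ[ℝ] Matrix (Fin (n+4)) (Fin (n+4)) ℝ) :=
  ![phiD, phiS, phiA]

lemma phiD_mem_Vs {x : Fin (n+4) → ℝ} (hx : ∑ i, x i = 0) : phiD x ∈ Vs (n+4) := by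
  have h := comb_mem_Vs (x := x) (y := 0) (z := 0) hx (by simp)
  simpa using h

lemma phiS_mem_Vs {x : Fin (n+4) → ℝ} (hx : ∑ i, x i = 0) : phiS x ∈ Vs (n+4) := by
  have h := comb_mem_Vs (x := 0) (y := x) (z := 0) (by simp) hx
  simpa using h

lemma phiA_mem_Vs (x : Fin (n+4) → ℝ) : phiA x ∈ Vs (n+4) := by
  have h := comb_mem_Vs (x := 0) (y := 0) (z := x) (by simp) (by simp)
  simpa using h

lemma Phi_mem_Vs (p : Fin 3) {x : Fin (n+4) → ℝ} (hx : ∑ i, x i = 0) :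
    Phi p x ∈ Vs (n+4) := by
  fin_cases p
  · exact phiD_mem_Vs hx
  · exact phiS_mem_Vs hx
  · exact phiA_mem_Vs x

lemma sum_comb (g : Fin 3 × Fin (n+3) → ℝ) :
    ∑ pk : Fin 3 × Fin (n+3), g pk • Phi pk.1 (vv pk.2)
      = phiD (∑ k, g (0,k) • vv k) + phiS (∑ k, g (1,k) • vv k)
        + phiA (∑ k, g (2,k) • vv k) := by
  have e1 : ∀ p : Fin 3, ∑ k, g (p,k) • Phi p (vv k) = Phi p (∑ k, g (p,k) • vv k) := by
    intro p
    rw [map_sum]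
    exact Finset.sum_congr rfl fun k _ => (map_smul (Phi p) _ _).symm
  rw [Fintype.sum_prod_type, Fin.sum_univ_three, e1, e1, e1]
  rfl

lemma comb_sum_zero (c : Fin (n+3) → ℝ) : ∑ i, (∑ k, c k • vv k) i = 0 := by
  simp only [Finset.sum_apply, Pi.smul_apply, smul_eq_mul]
  rw [Finset.sum_comm]
  simp [← Finset.mul_sum, sum_vv]

lemma bvec_indep :
    LinearIndependent ℝ (fun pk : Fin 3 × Fin (n+3) => Phi pk.1 (vv pk.2)) := by
  rw [Fintype.linearIndependent_iff]
  intro g hg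
  rw [sum_comb] at hg
  obtain ⟨h1, h2, h3⟩ := decomp_unique _ _ _ (comb_sum_zero _) hg
  rintro ⟨p, k⟩
  fin_cases p
  · exact vv_indep _ h1 k
  · exact vv_indep _ h2 k
  · exact vv_indep _ h3 k

lemma cvec_indep : LinearIndependent ℝ (fun p : Fin 3 => Phi p (wv : Fin (n+4) → ℝ)) := by
  rw [Fintype.linearIndependent_iff]
  intro g hg
  rw [Fin.sum_univ_three] at hg
  have hg' : phiD (g 0 • (wv : Fin (n+4) → ℝ)) + phiS (g 1 • (wv : Fin (n+4) → ℝ))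
      + phiA (g 2 • (wv : Fin (n+4) → ℝ)) = 0 := by
    rw [_root_.map_smul, _root_.map_smul, _root_.map_smul]
    exact hg
  have hsz : ∑ i, (g 2 • (wv : Fin (n+4) → ℝ)) i = 0 := by
    simp [← Finset.mul_sum, sum_wv]
  obtain ⟨h1, h2, h3⟩ := decomp_unique _ _ _ hsz hg'
  intro p
  have ev : ∀ c : ℝ, c • (wv : Fin (n+4) → ℝ) = 0 → c = 0 := by
    intro c hc
    have := congrFun hc e0
    simpa [wv_e0] using this
  fin_cases p
  · exact ev _ h1
  · exact ev _ h2
  · exact ev _ h3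
end P19

namespace P19
variable {n : ℕ}

noncomputable def basisVs : Module.Basis (Fin 3 × Fin (n+3)) ℝ ↥(Vs (n+4)) :=
  Module.Basis.mk (v := fun pk => (⟨Phi pk.1 (vv pk.2), Phi_mem_Vs pk.1 (sum_vv pk.2)⟩ : ↥(Vs (n+4))))
    (LinearIndependent.of_comp (Vs (n+4)).subtype bvec_indep)
    (by
      rintro ⟨W, hW⟩ -
      obtain ⟨x, y, z, hx, hy, hz, rfl⟩ := mem_Vs_elim hW
      rw [mem_span_range_iff_exists_fun]
      refine ⟨fun pk => (![x, y, z] pk.1) (vι pk.2), ?_⟩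
      apply Subtype.ext
      push_cast [AddSubmonoidClass.coe_finset_sum]
      refine (sum_comb fun pk => (![x,y,z] pk.1) (vι pk.2)).trans ?_
      show phiD (∑ k, x (vι k) • vv k) + phiS (∑ k, y (vι k) • vv k)
          + phiA (∑ k, z (vι k) • vv k) = _
      rw [← decomp_coord x hx, ← decomp_coord y hy, ← decomp_coord z hz])

lemma phiD_mem_F : phiD (wv : Fin (n+4) → ℝ) ∈
    Vs (n+4) ⊓ fixedSpace {σ : Equiv.Perm (Fin (n+4)) | σ em = em} := by
  have h := comb_mem_F (n := n) 1 0 0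
  simpa using h

lemma phiS_mem_F : phiS (wv : Fin (n+4) → ℝ) ∈
    Vs (n+4) ⊓ fixedSpace {σ : Equiv.Perm (Fin (n+4)) | σ em = em} := by
  have h := comb_mem_F (n := n) 0 1 0
  simpa using h

lemma phiA_mem_F : phiA (wv : Fin (n+4) → ℝ) ∈
    Vs (n+4) ⊓ fixedSpace {σ : Equiv.Perm (Fin (n+4)) | σ em = em} := by
  have h := comb_mem_F (n := n) 0 0 1
  simpa using h

lemma Phi_mem_F (p : Fin 3) : Phi p (wv : Fin (n+4) → ℝ) ∈
    Vs (n+4) ⊓ fixedSpace {σ : Equiv.Perm (Fin (n+4)) | σ em = em} := by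
  fin_cases p
  · exact phiD_mem_F
  · exact phiS_mem_F
  · exact phiA_mem_F

noncomputable def basisF : Module.Basis (Fin 3) ℝ
    ↥(Vs (n+4) ⊓ fixedSpace {σ : Equiv.Perm (Fin (n+4)) | σ em = em}) :=
  Module.Basis.mk (v := fun p => ⟨Phi p wv, Phi_mem_F p⟩)
    (LinearIndependent.of_comp
      (Vs (n+4) ⊓ fixedSpace {σ : Equiv.Perm (Fin (n+4)) | σ em = em}).subtype cvec_indep)
    (by
      rintro ⟨W, hW⟩ -
      obtain ⟨t, u, v, rfl⟩ := mem_F_elim hW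
      rw [mem_span_range_iff_exists_fun]
      refine ⟨![t, u, v], ?_⟩
      apply Subtype.ext
      push_cast [AddSubmonoidClass.coe_finset_sum]
      rw [Fin.sum_univ_three]
      rfl)

lemma basisVs_coe (pk : Fin 3 × Fin (n+3)) :
    (basisVs pk : Matrix (Fin (n+4)) (Fin (n+4)) ℝ) = Phi pk.1 (vv pk.2) := by
  rw [basisVs, Module.Basis.mk_apply]

lemma basisF_coe (p : Fin 3) :
    ((basisF p : ↥(Vs (n+4) ⊓ fixedSpace {σ : Equiv.Perm (Fin (n+4)) | σ em = em}))
      : Matrix (Fin (n+4)) (Fin (n+4)) ℝ) = Phi p wv := by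
  rw [basisF, Module.Basis.mk_apply]
end P19

namespace P19
variable {n : ℕ}

lemma main_aux (A : Matrix (Fin (n+4)) (Fin (n+4)) ℝ →ₗ[ℝ] Matrix (Fin (n+4)) (Fin (n+4)) ℝ)
    (hA : ∀ (σ : Equiv.Perm (Fin (n+4))) (W : Matrix (Fin (n+4)) (Fin (n+4)) ℝ),
      A (permMat σ * W * (permMat σ)ᵀ) = permMat σ * A W * (permMat σ)ᵀ) :
    ∃ (h1 : ∀ W ∈ Vs (n+4), A W ∈ Vs (n+4))
      (h2 : ∀ W ∈ Vs (n+4) ⊓ fixedSpace {σ : Equiv.Perm (Fin (n+4)) | σ em = em},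
        A W ∈ Vs (n+4) ⊓ fixedSpace {σ : Equiv.Perm (Fin (n+4)) | σ em = em}),
      LinearMap.charpoly (A.restrict h1) = LinearMap.charpoly (A.restrict h2) ^ (n+3) := by
  have hA' : ∀ σ W, A (conjL σ W) = conjL σ (A W) := fun σ W => hA σ W
  obtain ⟨aD, sD, cD, hD⟩ := schur A hA' phiD phiD_equiv
  obtain ⟨aS, sS, cS, hS⟩ := schur A hA' phiS phiS_equiv
  obtain ⟨aA, sA, cA, hAA⟩ := schur A hA' phiA phiA_equiv
  set Mmat : Matrix (Fin 3) (Fin 3) ℝ :=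
    Matrix.of ![![aD, aS, aA], ![sD, sS, sA], ![cD, cS, cA]] with hMmat
  have hM : ∀ (p : Fin 3) (x : Fin (n+4) → ℝ), (∑ i, x i = 0) →
      A (Phi p x) = ∑ q : Fin 3, Mmat q p • Phi q x := by
    intro p x hx
    rw [Fin.sum_univ_three]
    fin_cases p
    · show A (phiD x) = aD • phiD x + sD • phiS x + cD • phiA x
      exact hD x hx
    · show A (phiS x) = aS • phiD x + sS • phiS x + cS • phiA x
      exact hS x hx
    · show A (phiA x) = aA • phiD x + sA • phiS x + cA • phiA x
      exact hAA x hx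
  have hmem1 : ∀ (p : Fin 3) (x : Fin (n+4) → ℝ), (∑ i, x i = 0) → A (Phi p x) ∈ Vs (n+4) := by
    intro p x hx
    rw [hM p x hx]
    exact sum_mem fun q _ => smul_mem _ _ (Phi_mem_Vs q hx)
  have hmem2 : ∀ (p : Fin 3), A (Phi p (wv : Fin (n+4) → ℝ)) ∈
      Vs (n+4) ⊓ fixedSpace {σ : Equiv.Perm (Fin (n+4)) | σ em = em} := by
    intro p
    rw [hM p wv sum_wv]
    exact sum_mem fun q _ => smul_mem _ _ (Phi_mem_F q)
  have h1 : ∀ W ∈ Vs (n+4), A W ∈ Vs (n+4) := by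
    intro W hW
    obtain ⟨x, y, z, hx, hy, hz, rfl⟩ := mem_Vs_elim hW
    rw [map_add, map_add]
    exact add_mem (add_mem (hmem1 0 x hx) (hmem1 1 y hy)) (hmem1 2 z hz)
  have h2 : ∀ W ∈ Vs (n+4) ⊓ fixedSpace {σ : Equiv.Perm (Fin (n+4)) | σ em = em},
      A W ∈ Vs (n+4) ⊓ fixedSpace {σ : Equiv.Perm (Fin (n+4)) | σ em = em} := by
    intro W hW
    obtain ⟨t, u, v, rfl⟩ := mem_F_elim hW
    rw [map_add, map_add, _root_.map_smul, _root_.map_smul, _root_.map_smul]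
    exact add_mem (add_mem (smul_mem _ _ (hmem2 0)) (smul_mem _ _ (hmem2 1)))
      (smul_mem _ _ (hmem2 2))
  refine ⟨h1, h2, ?_⟩
  have hrestVs : ∀ pk : Fin 3 × Fin (n+3), (A.restrict h1) (basisVs pk)
      = ∑ qk : Fin 3 × Fin (n+3),
        (blockDiagonal fun _ : Fin (n+3) => Mmat) qk pk • basisVs qk := by
    rintro ⟨p, k⟩
    apply Subtype.ext
    rw [LinearMap.restrict_coe_apply, basisVs_coe, hM p _ (sum_vv k)]
    rw [AddSubmonoidClass.coe_finset_sum]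
    symm
    rw [Fintype.sum_prod_type]
    refine Finset.sum_congr rfl fun q _ => ?_
    rw [Finset.sum_eq_single k]
    · rw [coe_smul, basisVs_coe, blockDiagonal_apply_eq]
    · intro l _ hl
      rw [coe_smul, blockDiagonal_apply_ne _ _ _ hl, zero_smul]
    · intro h; exact absurd (Finset.mem_univ _) h
  have hrestF : ∀ p : Fin 3, (A.restrict h2) (basisF p)
      = ∑ q : Fin 3, Mmat q p • basisF q := by
    intro p
    apply Subtype.ext
    rw [LinearMap.restrict_coe_apply, basisF_coe, hM p _ sum_wv]
    rw [AddSubmonoidClass.coe_finset_sum]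
    exact Finset.sum_congr rfl fun q _ => by rw [coe_smul, basisF_coe]
  have hVs := toMatrix_eq basisVs (A.restrict h1) _ hrestVs
  have hF := toMatrix_eq basisF (A.restrict h2) _ hrestF
  rw [← LinearMap.charpoly_toMatrix (A.restrict h1) basisVs,
    ← LinearMap.charpoly_toMatrix (A.restrict h2) basisF, hVs, hF,
    charpoly_blockDiag]
  simp

end P19

/-- for `d ≥ 4`, an `S_d`-equivariant linear endomorphism `A` of `M(d,d)`
preserves both `V_s` and `F = V_s ∩ M(d,d)^{S_{d−1}×S_1}`, and the characteristic
polynomial of `A|_{V_s}` is the `(d−1)`-st power of the characteristic polynomial of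
`A|_F`. -/
theorem charpoly_of_restriction_to_Vs (d : ℕ) (hd : 4 ≤ d)
    (A : Matrix (Fin d) (Fin d) ℝ →ₗ[ℝ] Matrix (Fin d) (Fin d) ℝ)
    (hA : ∀ (σ : Equiv.Perm (Fin d)) (W : Matrix (Fin d) (Fin d) ℝ),
      A (permMat σ * W * (permMat σ)ᵀ) = permMat σ * A W * (permMat σ)ᵀ) :
    ∃ (h1 : ∀ W ∈ Vs d, A W ∈ Vs d)
      (h2 : ∀ W ∈ Vs d ⊓ fixedSpace {σ : Equiv.Perm (Fin d) |
          σ ⟨d - 1, by omega⟩ = ⟨d - 1, by omega⟩},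
        A W ∈ Vs d ⊓ fixedSpace {σ : Equiv.Perm (Fin d) |
          σ ⟨d - 1, by omega⟩ = ⟨d - 1, by omega⟩}),
      LinearMap.charpoly (A.restrict h1) = LinearMap.charpoly (A.restrict h2) ^ (d - 1) := by
  obtain ⟨n, rfl⟩ : ∃ n, d = n + 4 := ⟨d - 4, by omega⟩
  exact P19.main_aux A hA
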